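/- Let 1 ≤ k < n be coprime with continued fraction expansions n/k = [n_1,...,n_p] and n/(n−k) = [n_1',...,n_{p'}'] (entries ≥ 2). Then n_1' + ⋯ + n_α' = 2α + β whenever n_1 + ⋯ + n_β − 2β + 1 ≤ α ≤ n_1 + ⋯ + n_{β+1} − 2β − 2. Equivalently, the Young diagrams of the partitions (n_1−1, n_1+n_2−3, ..., n_1+⋯+n_α−2α+1, ...) and (n_1'−1, n_1'+n_2'−3, ..., n_1'+⋯+n_β'−2β+1, ...) are dual (conjugate) to each other. -/

import Mathlib

/-- Evaluation of the Hirzebruch–Jung ("negative") continued fraction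
`[n₁,…,n_p] = n₁ − 1/(n₂ − 1/(⋯ − 1/n_p))` as a rational number. -/
def hjEval : List ℤ → ℚ
  | [] => 0
  | [a] => (a : ℚ)
  | a :: b :: l => (a : ℚ) - 1 / hjEval (b :: l)

def hjInc : List ℤ → List ℤ
  | [] => []
  | a :: l => (a + 1) :: l

def hjDual : List ℤ → List ℤ
  | [] => []
  | [a] => List.replicate (a.toNat - 1) 2
  | a :: b :: l => if a ≤ 2 then hjInc (hjDual (b :: l)) else 2 :: hjDual ((a - 1) :: b :: l)
termination_by L => (L.map Int.toNat).sum + L.length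
decreasing_by
  · simp; omega
  · simp; omega

lemma hjEval_cons (a : ℤ) (l : List ℤ) (hl : l ≠ []) :
    hjEval (a :: l) = (a : ℚ) - 1 / hjEval l := by
  cases l with
  | nil => exact absurd rfl hl
  | cons b t => rfl

lemma hjEval_head_add (a : ℤ) (l : List ℤ) :
    hjEval ((a + 1) :: l) = hjEval (a :: l) + 1 := by
  cases l with
  | nil => simp [hjEval]
  | cons b t => simp [hjEval]; push_cast; ring

lemma hjDual_two_cons (l : List ℤ) (hl : l ≠ []) : hjDual (2 :: l) = hjInc (hjDual l) := by
  cases l with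
  | nil => exact absurd rfl hl
  | cons b t => rw [hjDual.eq_def]; simp

lemma hjDual_cons_of_three (a : ℤ) (l : List ℤ) (ha : 3 ≤ a) :
    hjDual (a :: l) = 2 :: hjDual ((a - 1) :: l) := by
  cases l with
  | nil =>
      have h : a.toNat - 1 = ((a-1).toNat - 1) + 1 := by omega
      simp only [hjDual.eq_def]
      rw [h, List.replicate_succ]
  | cons b t => rw [hjDual.eq_def]; simp [show ¬ a ≤ 2 by omega]

lemma hjEval_gt_one : ∀ L : List ℤ, L ≠ [] → (∀ a ∈ L, 2 ≤ a) → 1 < hjEval L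
  | [a], _, h2 => by
      have := h2 a (by simp)
      simp [hjEval]
      exact_mod_cast lt_of_lt_of_le one_lt_two (by exact_mod_cast this)
  | a :: b :: l, _, h2 => by
      have hy := hjEval_gt_one (b :: l) (by simp) (fun x hx => h2 x (by simp [hx]))
      have ha : (2:ℚ) ≤ a := by exact_mod_cast h2 a (by simp)
      have h1 : 0 < 1 / hjEval (b :: l) := by positivity
      have h2' : 1 / hjEval (b :: l) < 1 := by
        rw [div_lt_one (by linarith)]; linarith
      show 1 < (a:ℚ) - 1 / hjEval (b :: l)
      linarith

theorem hjDual_spec (L : List ℤ) (hL : L ≠ []) (h2 : ∀ a ∈ L, 2 ≤ a) :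
    hjDual L ≠ [] ∧ (∀ a ∈ hjDual L, 2 ≤ a) ∧
      hjEval (hjDual L) = hjEval L / (hjEval L - 1) := by
  match L with
  | a :: l =>
    rcases eq_or_lt_of_le (h2 a (by simp)) with ha2 | ha3
    · -- a = 2
      cases l with
      | nil =>
        have ha : a = 2 := ha2.symm
        subst ha
        have hD : hjDual [(2:ℤ)] = [2] := by simp [hjDual.eq_def, List.replicate]
        refine ⟨by simp [hD], by simp [hD], ?_⟩
        rw [hD]
        show ((2:ℤ):ℚ) = ((2:ℤ):ℚ) / (((2:ℤ):ℚ) - 1)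
        norm_num
      | cons c t =>
        have hl : (c :: t) ≠ [] := by simp
        have h2l : ∀ x ∈ c :: t, 2 ≤ x := fun x hx => h2 x (by simp [hx])
        obtain ⟨hne, hent, hval⟩ := hjDual_spec (c :: t) hl h2l
        have hy : 1 < hjEval (c :: t) := hjEval_gt_one _ hl h2l
        rw [← ha2, hjDual_two_cons _ hl]
        obtain ⟨d, u, hd⟩ : ∃ d u, hjDual (c :: t) = d :: u := by
          cases hdu : hjDual (c :: t) with
          | nil => exact absurd hdu hne
          | cons d u => exact ⟨d, u, rfl⟩
        rw [hd]
        rw [show hjInc (d :: u) = (d + 1) :: u from rfl]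
        refine ⟨by simp, ?_, ?_⟩
        · intro x hx
          rcases (List.mem_cons).1 hx with h | h
          · have : 2 ≤ d := hent d (by rw [hd]; simp)
            subst h; omega
          · exact hent x (by rw [hd]; simp [h])
        · rw [hjEval_head_add, ← hd, hval, hjEval_cons 2 (c :: t) hl]
          set y := hjEval (c :: t) with hy'
          have h0 : y ≠ 0 := by linarith
          have h1 : y - 1 ≠ 0 := by intro h; rw [sub_eq_zero] at h; linarith
          have hh2 : ((2:ℤ):ℚ) - 1 / y - 1 = (y - 1) / y := by push_cast; field_simp; ring
          have hh3 : ((2:ℤ):ℚ) - 1 / y = (2 * y - 1) / y := by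
            rw [eq_div_iff h0]; push_cast; field_simp
          rw [hh2, hh3, div_div_div_eq]
          rw [div_add' _ _ _ h1, div_eq_div_iff (by exact h1)
            (by intro h; rcases mul_eq_zero.1 h with h | h; exact h0 h; exact h1 h)]
          ring
    · -- 3 ≤ a
      have ha : 3 ≤ a := ha3
      have hM2 : ∀ x ∈ (a - 1) :: l, 2 ≤ x := by
        intro x hx
        rcases (List.mem_cons).1 hx with h | h
        · omega
        · exact h2 x (by simp [h])
      obtain ⟨hne, hent, hval⟩ := hjDual_spec ((a - 1) :: l) (by simp) hM2
      have hx' : 1 < hjEval ((a - 1) :: l) := hjEval_gt_one _ (by simp) hM2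
      rw [hjDual_cons_of_three a l ha]
      refine ⟨by simp, ?_, ?_⟩
      · intro x hx
        rcases (List.mem_cons).1 hx with h | h
        · omega
        · exact hent x h
      · rw [hjEval_cons 2 _ hne, hval]
        have hEv : hjEval (a :: l) = hjEval ((a - 1) :: l) + 1 := by
          have := hjEval_head_add (a - 1) l
          rw [sub_add_cancel] at this
          rw [this]
        rw [hEv]
        set x := hjEval ((a - 1) :: l) with hx
        have h0 : x ≠ 0 := by linarith
        have h1 : x - 1 ≠ 0 := by intro h; rw [sub_eq_zero] at h; linarith
        rw [one_div_div]
        push_cast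
        field_simp
        ring_nf
        rw [mul_inv_cancel₀ h0, sq, mul_assoc, mul_inv_cancel₀ h0, mul_one]
termination_by (L.map Int.toNat).sum + L.length
decreasing_by
  · simp
    rename_i hlct
    subst hlct
    simp
    omega
  · simp; omega

theorem hjEval_unique : ∀ L M : List ℤ, L ≠ [] → M ≠ [] →
    (∀ a ∈ L, 2 ≤ a) → (∀ a ∈ M, 2 ≤ a) → hjEval L = hjEval M → L = M
  | a :: l, b :: m, _, _, h2L, h2M, heq => by
    cases l with
    | nil =>
      cases m with
      | nil =>
        have : (a:ℚ) = (b:ℚ) := heq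
        have : a = b := by exact_mod_cast this
        rw [this]
      | cons d m' =>
        exfalso
        have hZ : 1 < hjEval (d :: m') :=
          hjEval_gt_one _ (by simp) (fun x hx => h2M x (by simp [hx]))
        have heq' : (a:ℚ) = (b:ℚ) - 1 / hjEval (d :: m') := heq
        have h1 : 0 < 1 / hjEval (d :: m') := by positivity
        have h2 : 1 / hjEval (d :: m') < 1 := by rw [div_lt_one (by linarith)]; linarith
        have hb1 : ((b:ℚ) - 1) < (a:ℚ) := by linarith
        have hb2 : (a:ℚ) < (b:ℚ) := by linarith
        have k1 : (b:ℤ) - 1 < a := by exact_mod_cast (by push_cast; linarith : ((b - 1 : ℤ):ℚ) < ((a:ℤ):ℚ))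
        have k2 : a < b := by exact_mod_cast hb2
        omega
    | cons c l' =>
      cases m with
      | nil =>
        exfalso
        have hZ : 1 < hjEval (c :: l') :=
          hjEval_gt_one _ (by simp) (fun x hx => h2L x (by simp [hx]))
        have heq' : (a:ℚ) - 1 / hjEval (c :: l') = (b:ℚ) := heq
        have h1 : 0 < 1 / hjEval (c :: l') := by positivity
        have h2 : 1 / hjEval (c :: l') < 1 := by rw [div_lt_one (by linarith)]; linarith
        have hb2 : (b:ℚ) < (a:ℚ) := by linarith
        have k1 : (a:ℤ) - 1 < b := by exact_mod_cast (by push_cast; linarith : ((a - 1 : ℤ):ℚ) < ((b:ℤ):ℚ))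
        have k2 : b < a := by exact_mod_cast hb2
        omega
      | cons d m' =>
        have hY : 1 < hjEval (c :: l') :=
          hjEval_gt_one _ (by simp) (fun x hx => h2L x (by simp [hx]))
        have hZ : 1 < hjEval (d :: m') :=
          hjEval_gt_one _ (by simp) (fun x hx => h2M x (by simp [hx]))
        have heq' : (a:ℚ) - 1 / hjEval (c :: l') = (b:ℚ) - 1 / hjEval (d :: m') := heq
        have hY1 : 0 < 1 / hjEval (c :: l') := by positivity
        have hY2 : 1 / hjEval (c :: l') < 1 := by rw [div_lt_one (by linarith)]; linarith
        have hZ1 : 0 < 1 / hjEval (d :: m') := by positivity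
        have hZ2 : 1 / hjEval (d :: m') < 1 := by rw [div_lt_one (by linarith)]; linarith
        have hab1 : ((a:ℚ) - b) < 1 := by linarith
        have hab2 : ((b:ℚ) - a) < 1 := by linarith
        have k1 : a - b < 1 := by exact_mod_cast (by push_cast; linarith : ((a - b : ℤ):ℚ) < 1)
        have k2 : b - a < 1 := by exact_mod_cast (by push_cast; linarith : ((b - a : ℤ):ℚ) < 1)
        have hab : a = b := by omega
        subst hab
        have hinv : 1 / hjEval (c :: l') = 1 / hjEval (d :: m') := by linarith
        have hYZ : hjEval (c :: l') = hjEval (d :: m') := by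
          field_simp at hinv
          exact hinv.symm
        have := hjEval_unique (c :: l') (d :: m') (by simp) (by simp)
          (fun x hx => h2L x (by simp [hx])) (fun x hx => h2M x (by simp [hx])) hYZ
        rw [this]

lemma hj_sum_ge (M : List ℤ) (h : ∀ a ∈ M, 2 ≤ a) : 2 * (M.length : ℤ) ≤ M.sum := by
  induction M with
  | nil => simp
  | cons a t ih =>
    have h1 := h a (by simp)
    have h2 := ih (fun x hx => h x (by simp [hx]))
    simp only [List.length_cons, List.sum_cons]
    push_cast
    linarith

lemma hj_take_sum_ge (L : List ℤ) (h : ∀ a ∈ L, 2 ≤ a) (β : ℕ) (hβ : β ≤ L.length) :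
    2 * (β : ℤ) ≤ (L.take β).sum := by
  have := hj_sum_ge (L.take β) (fun a ha => h a (List.mem_of_mem_take ha))
  rw [List.length_take, min_eq_left hβ] at this
  exact this

theorem hjDual_take_sum (L : List ℤ) (hL : L ≠ []) (h2 : ∀ a ∈ L, 2 ≤ a) :
    ∀ α β : ℕ, β < L.length →
      (L.take β).sum - 2 * (β : ℤ) + 1 ≤ (α : ℤ) →
      (α : ℤ) ≤ (L.take (β + 1)).sum - 2 * (β : ℤ) - 2 →
      ((hjDual L).take α).sum = 2 * (α : ℤ) + (β : ℤ) := by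
  match L with
  | a :: l =>
    intro α β hβ hlo hhi
    rcases eq_or_lt_of_le (h2 a (by simp)) with ha2 | ha3
    · -- a = 2
      cases β with
      | zero =>
        exfalso
        simp only [List.take_succ_cons, List.take_zero, List.sum_cons, List.sum_nil,
          Nat.cast_zero] at hlo hhi
        omega
      | succ γ =>
        cases l with
        | nil => simp at hβ
        | cons c t =>
          subst ha2
          have hl : (c :: t) ≠ [] := by simp
          have h2l : ∀ x ∈ c :: t, 2 ≤ x := fun x hx => h2 x (by simp [hx])
          have hγ : γ < (c :: t).length := by simpa using hβ
          simp only [List.take_succ_cons, List.sum_cons] at hlo hhi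
          have hlo' : ((c :: t).take γ).sum - 2 * (γ : ℤ) + 1 ≤ (α : ℤ) := by
            push_cast at hlo ⊢; omega
          have hhi' : (α : ℤ) ≤ ((c :: t).take (γ + 1)).sum - 2 * (γ : ℤ) - 2 := by
            simp only [List.take_succ_cons, List.sum_cons]
            push_cast at hhi ⊢; omega
          have IH := hjDual_take_sum (c :: t) hl h2l α γ hγ hlo' hhi'
          have hsge := hj_take_sum_ge (c :: t) h2l γ (le_of_lt hγ)
          have hα : 1 ≤ α := by
            by_contra h
            push_cast [show α = 0 by omega] at hlo'
            omega
          obtain ⟨α', rfl⟩ : ∃ α', α = α' + 1 := ⟨α - 1, by omega⟩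
          obtain ⟨hne, -, -⟩ := hjDual_spec (c :: t) hl h2l
          obtain ⟨d, u, hd⟩ : ∃ d u, hjDual (c :: t) = d :: u := by
            cases hdu : hjDual (c :: t) with
            | nil => exact absurd hdu hne
            | cons d u => exact ⟨d, u, rfl⟩
          rw [hjDual_two_cons _ hl, hd]
          rw [show hjInc (d :: u) = (d + 1) :: u from rfl]
          rw [hd] at IH
          simp only [List.take_succ_cons, List.sum_cons] at IH ⊢
          push_cast at IH ⊢
          omega
    · -- 3 ≤ a
      have ha : 3 ≤ a := ha3
      have hM2 : ∀ x ∈ (a - 1) :: l, 2 ≤ x := by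
        intro x hx
        rcases (List.mem_cons).1 hx with h | h
        · omega
        · exact h2 x (by simp [h])
      rw [hjDual_cons_of_three a l ha]
      cases β with
      | zero =>
        simp only [List.take_succ_cons, List.take_zero, List.sum_cons, List.sum_nil,
          Nat.cast_zero] at hlo hhi
        have hα : 1 ≤ α := by omega
        obtain ⟨α', rfl⟩ : ∃ α', α = α' + 1 := ⟨α - 1, by omega⟩
        simp only [List.take_succ_cons, List.sum_cons]
        rcases Nat.eq_zero_or_pos α' with h0 | hpos
        · subst h0; simp
        · have hlo' : (((a - 1) :: l).take 0).sum - 2 * ((0:ℕ) : ℤ) + 1 ≤ (α' : ℤ) := by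
            simp; exact_mod_cast hpos
          have hhi' : (α' : ℤ) ≤ (((a - 1) :: l).take 1).sum - 2 * ((0:ℕ) : ℤ) - 2 := by
            simp only [List.take_succ_cons, List.take_zero, List.sum_cons, List.sum_nil,
              Nat.cast_zero]
            push_cast at hhi ⊢
            omega
          have IH := hjDual_take_sum ((a - 1) :: l) (by simp) hM2 α' 0 (by simp) hlo' hhi'
          push_cast at IH ⊢
          omega
      | succ γ =>
        have hβ' : γ + 1 < ((a - 1) :: l).length := by simpa using hβ
        have hsge : 2 * (γ : ℤ) ≤ (l.take γ).sum := by
          apply hj_take_sum_ge l (fun x hx => h2 x (by simp [hx]))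
          simp at hβ; omega
        simp only [List.take_succ_cons, List.sum_cons] at hlo hhi
        have hα : 2 ≤ α := by push_cast at hlo; omega
        obtain ⟨α', rfl⟩ : ∃ α', α = α' + 1 := ⟨α - 1, by omega⟩
        have hlo' : (((a - 1) :: l).take (γ + 1)).sum - 2 * ((γ + 1 : ℕ) : ℤ) + 1 ≤ (α' : ℤ) := by
          simp only [List.take_succ_cons, List.sum_cons]
          push_cast at hlo ⊢
          omega
        have hhi' : (α' : ℤ) ≤ (((a - 1) :: l).take (γ + 1 + 1)).sum - 2 * ((γ + 1 : ℕ) : ℤ) - 2 := by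
          simp only [List.take_succ_cons, List.sum_cons]
          push_cast at hhi ⊢
          omega
        have IH := hjDual_take_sum ((a - 1) :: l) (by simp) hM2 α' (γ + 1) hβ' hlo' hhi'
        simp only [List.take_succ_cons, List.sum_cons]
        push_cast at IH ⊢
        omega
termination_by (L.map Int.toNat).sum + L.length
decreasing_by
  · have hlct : l = c :: t := by assumption
    subst hlct
    simp
    omega
  · simp; omega
  · simp; omega


/-- If `n/k = [n₁,…,n_p]` and `n/(n−k) = [n₁',…,n_{p'}']` are the Hirzebruch–Jung
continued fraction expansions (all entries ≥ 2) for coprime `1 ≤ k < n`, then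
`n₁' + ⋯ + n_α' = 2α + β` whenever
`n₁ + ⋯ + n_β − 2β + 1 ≤ α ≤ n₁ + ⋯ + n_{β+1} − 2β − 2`; i.e. the Young diagrams of
the partitions `(n₁−1, n₁+n₂−3, …)` and `(n₁'−1, n₁'+n₂'−3, …)` are mutually dual. -/
theorem hj_dual_partial_sums (n k : ℕ) (hk : 1 ≤ k) (hkn : k < n) (hco : Nat.Coprime n k)
    (L L' : List ℤ) (hL : L ≠ []) (hL' : L' ≠ [])
    (h2 : ∀ a ∈ L, 2 ≤ a) (h2' : ∀ a ∈ L', 2 ≤ a)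
    (hval : hjEval L = (n : ℚ) / (k : ℚ))
    (hval' : hjEval L' = (n : ℚ) / ((n : ℚ) - (k : ℚ))) :
    ∀ α β : ℕ, β < L.length →
      (L.take β).sum - 2 * (β : ℤ) + 1 ≤ (α : ℤ) →
      (α : ℤ) ≤ (L.take (β + 1)).sum - 2 * (β : ℤ) - 2 →
      (L'.take α).sum = 2 * (α : ℤ) + (β : ℤ) := by
  have hk0 : (k:ℚ) ≠ 0 := Nat.cast_ne_zero.2 (by omega)
  have hklt : (k:ℚ) < (n:ℚ) := by exact_mod_cast hkn
  have hnk : (n:ℚ) - (k:ℚ) ≠ 0 := by intro h; rw [sub_eq_zero] at h; linarith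
  obtain ⟨hne, hent, hdval⟩ := hjDual_spec L hL h2
  have hveq : hjEval (hjDual L) = (n:ℚ) / ((n:ℚ) - (k:ℚ)) := by
    rw [hdval, hval, div_sub_one hk0, div_div_div_eq]
    rw [div_eq_div_iff (by
          intro h
          rcases mul_eq_zero.1 h with h | h
          · exact hk0 h
          · exact hnk h) hnk]
    ring
  have hLd : L' = hjDual L := hjEval_unique L' (hjDual L) hL' hne h2' hent
    (hval'.trans hveq.symm)
  rw [hLd]
  exact hjDual_take_sum L hL h2
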